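/- The function d_V(M1, M2) = max{V1* - V1^{π2*}, V2* - V2^{π1*}} on MDPs (where Vi* is the optimal value of MDP i at the initial state and Vi^π is the value of policy π in MDP i) fails the triangle inequality in general: there exist three MDPs M1, M2, M3 on a single state with three actions such that d_V(M1,M3) > d_V(M1,M2) + d_V(M2,M3). Concretely, with a single state, three actions a1,a2,a3, discount γ ∈ [0,1), and rewards R1(a1)=100, R1(a2)=90, R1(a3)=-100; R2(a2)=100, R2(a1)=R2(a3)=90; R3(a3)=100, R3(a1)=R3(a2)=90, one has d_V(M1,M2)=10/(1-γ), d_V(M2,M3)=10/(1-γ), d_V(M1,M3)=200/(1-γ). -/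

import Mathlib

/-- `d_V` fails the triangle inequality: concrete single-state counterexample. -/
theorem dV_not_metric (γ : ℝ) (hγ0 : 0 ≤ γ) (hγ1 : γ < 1)
    (R1 R2 R3 : Fin 3 → ℝ)
    (h1 : R1 0 = 100 ∧ R1 1 = 90 ∧ R1 2 = -100)
    (h2 : R2 1 = 100 ∧ R2 0 = 90 ∧ R2 2 = 90)
    (h3 : R3 2 = 100 ∧ R3 0 = 90 ∧ R3 1 = 90)
    (π1 π2 π3 : Fin 3)
    (hπ1 : ∀ a, R1 a ≤ R1 π1) (hπ2 : ∀ a, R2 a ≤ R2 π2) (hπ3 : ∀ a, R3 a ≤ R3 π3) :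
    let V : (Fin 3 → ℝ) → Fin 3 → ℝ := fun R a => R a / (1 - γ)
    let dV : (Fin 3 → ℝ) → Fin 3 → (Fin 3 → ℝ) → Fin 3 → ℝ := fun R π R' π' =>
      max (V R π - V R π') (V R' π' - V R' π)
    dV R1 π1 R2 π2 = 10 / (1 - γ) ∧
    dV R2 π2 R3 π3 = 10 / (1 - γ) ∧
    dV R1 π1 R3 π3 = 200 / (1 - γ) ∧
    dV R1 π1 R3 π3 > dV R1 π1 R2 π2 + dV R2 π2 R3 π3 := by
  obtain ⟨h1a, h1b, h1c⟩ := h1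
  obtain ⟨h2a, h2b, h2c⟩ := h2
  obtain ⟨h3a, h3b, h3c⟩ := h3
  have hpos : (0:ℝ) < 1 - γ := by linarith
  have hπ1' : π1 = 0 := by
    have := hπ1 0
    fin_cases π1 <;> simp_all <;> linarith
  have hπ2' : π2 = 1 := by
    have := hπ2 1
    fin_cases π2 <;> simp_all <;> linarith
  have hπ3' : π3 = 2 := by
    have := hπ3 2
    fin_cases π3 <;> simp_all <;> linarith
  subst hπ1' hπ2' hπ3'
  intro V dV
  simp only [V, dV, div_sub_div_same, h1a, h1b, h1c, h2a, h2b, h2c, h3a, h3b, h3c]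
  norm_num
  refine ⟨(div_le_div_iff_of_pos_right hpos).mpr (by norm_num), Or.inl ?_⟩
  rw [← add_div]
  exact (div_lt_div_iff_of_pos_right hpos).mpr (by norm_num)
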